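/- For any 0 < E ≤ 1 and s ≥ 0: g(g⁻¹(s − ln E) + 1) + ln E ≥ ln(e^s + e·E), provided s ≥ ln E (which holds automatically since s ≥ 0 ≥ ln E). That is, the new additive-noise lower bound of Theorem 4 dominates the Entropy Power Inequality bound for the additive noise channel. -/

import Mathlib

open Real Set Filter Topology

noncomputable def g (E : ℝ) : ℝ := (E + 1) * Real.log (E + 1) - E * Real.log E

noncomputable def ginv : ℝ → ℝ := Function.invFunOn g (Set.Ici 0)

lemma continuous_g : Continuous g := by
  have h1 : Continuous fun x : ℝ => (x + 1) * Real.log (x + 1) :=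
    Real.continuous_mul_log.comp (continuous_id.add continuous_const)
  exact h1.sub Real.continuous_mul_log

lemma hasDerivAt_g {x : ℝ} (hx : 0 < x) :
    HasDerivAt g (Real.log (x + 1) - Real.log x) x := by
  have h1 : HasDerivAt (fun y : ℝ => (y + 1) * Real.log (y + 1))
      (Real.log (x + 1) + 1) x := by
    have := (Real.hasDerivAt_mul_log (x := x + 1) (by positivity)).comp x
      ((hasDerivAt_id x).add_const 1)
    simpa [Function.comp_def] using this
  have h2 : HasDerivAt (fun y : ℝ => y * Real.log y) (Real.log x + 1) x :=
    Real.hasDerivAt_mul_log hx.ne'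
  have h3 := h1.sub h2
  refine h3.congr_deriv ?_
  ring

lemma two_log_le {v : ℝ} (hv : 1 ≤ v) : 2 * Real.log v ≤ v - 1 / v := by
  set f : ℝ → ℝ := fun v => v - 1 / v - 2 * Real.log v with hf
  have key : MonotoneOn f (Set.Ici 1) := by
    apply monotoneOn_of_deriv_nonneg (convex_Ici 1)
    · apply ContinuousOn.sub
      · apply ContinuousOn.sub continuousOn_id
        exact continuousOn_const.div continuousOn_id fun x hx => by
          have : (1:ℝ) ≤ x := hx
          positivity
      · exact continuousOn_const.mul (Real.continuousOn_log.mono fun x hx => by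
          have : (1:ℝ) ≤ x := hx
          simp only [Set.mem_compl_iff, Set.mem_singleton_iff]
          intro h; rw [h] at this; linarith)
    · intro x hx
      rw [interior_Ici] at hx
      have hx0 : 0 < x := lt_trans one_pos hx
      have : HasDerivAt f (1 - (-(x ^ 2)⁻¹) - 2 * x⁻¹) x := by
        have h1 : HasDerivAt (fun y : ℝ => 1 / y) (-(x ^ 2)⁻¹) x := by
          simpa [one_div] using hasDerivAt_inv hx0.ne'
        exact ((hasDerivAt_id x).sub h1).sub
          ((Real.hasDerivAt_log hx0.ne').const_mul 2)
      exact this.differentiableAt.differentiableWithinAt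
    · intro x hx
      rw [interior_Ici] at hx
      have hx0 : 0 < x := lt_trans one_pos hx
      have hd : HasDerivAt f (1 - (-(x ^ 2)⁻¹) - 2 * x⁻¹) x := by
        have h1 : HasDerivAt (fun y : ℝ => 1 / y) (-(x ^ 2)⁻¹) x := by
          simpa [one_div] using hasDerivAt_inv hx0.ne'
        exact ((hasDerivAt_id x).sub h1).sub
          ((Real.hasDerivAt_log hx0.ne').const_mul 2)
      rw [hd.deriv]
      have h2 : (0:ℝ) ≤ (x - 1) ^ 2 / x ^ 2 := by positivity
      have h3 : (x - 1) ^ 2 / x ^ 2 = 1 - -(x ^ 2)⁻¹ - 2 * x⁻¹ := by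
        field_simp; ring
      linarith [h3 ▸ h2]
  have h10 : f 1 ≤ f v := key (by simp) hv hv
  have : f 1 = 0 := by simp [hf]
  rw [this, hf] at h10
  simp only at h10
  linarith

lemma log_sq_le {t : ℝ} (ht : 0 < t) :
    (Real.log (t + 1) - Real.log t) ^ 2 ≤ 1 / (t * (t + 1)) := by
  set v : ℝ := Real.sqrt ((t + 1) / t) with hv
  have hvpos : 0 < v := Real.sqrt_pos.mpr (by positivity)
  have hv2 : v ^ 2 = (t + 1) / t := Real.sq_sqrt (by positivity)
  have hv1 : 1 ≤ v := by
    have h1 : (1:ℝ) ≤ (t + 1) / t := by rw [le_div_iff₀ ht]; linarith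
    calc (1:ℝ) = Real.sqrt 1 := Real.sqrt_one.symm
      _ ≤ v := Real.sqrt_le_sqrt h1
  have hlog : Real.log (t + 1) - Real.log t = 2 * Real.log v := by
    rw [hv, Real.log_sqrt (by positivity), Real.log_div (by positivity) ht.ne']
    ring
  have hkey := two_log_le hv1
  have htv : t * v ^ 2 = t + 1 := by rw [hv2]; field_simp
  have hrhs : v - 1 / v = 1 / (t * v) := by
    field_simp
    linear_combination htv
  have hL0 : 0 ≤ Real.log (t + 1) - Real.log t := by
    have := Real.log_le_log ht (by linarith : t ≤ t + 1)
    linarith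
  have hle : Real.log (t + 1) - Real.log t ≤ 1 / (t * v) := by
    rw [hlog]; rw [hrhs] at hkey; exact hkey
  calc (Real.log (t + 1) - Real.log t) ^ 2 ≤ (1 / (t * v)) ^ 2 := by
        exact pow_le_pow_left₀ hL0 hle 2
    _ = 1 / (t * (t + 1)) := by
        rw [div_pow, mul_pow]
        rw [hv2]
        field_simp

/-- the derivative of `exp ∘ g` -/
noncomputable def h (x : ℝ) : ℝ := (Real.log (x + 1) - Real.log x) * Real.exp (g x)

lemma hasDerivAt_h {x : ℝ} (hx : 0 < x) :
    HasDerivAt h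
      (((Real.log (x + 1) - Real.log x) ^ 2 - 1 / (x * (x + 1))) * Real.exp (g x)) x := by
  have d1 : HasDerivAt (fun y : ℝ => Real.log (y + 1) - Real.log y) ((x + 1)⁻¹ - x⁻¹) x := by
    have h1 : HasDerivAt (fun y : ℝ => Real.log (y + 1)) (x + 1)⁻¹ x := by
      have := (Real.hasDerivAt_log (x := x + 1) (by positivity)).comp x
        ((hasDerivAt_id x).add_const 1)
      simpa [Function.comp_def] using this
    exact h1.sub (Real.hasDerivAt_log hx.ne')
  have d2 : HasDerivAt (fun y : ℝ => Real.exp (g y))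
      ((Real.log (x + 1) - Real.log x) * Real.exp (g x)) x := by
    simpa [mul_comm] using (hasDerivAt_g hx).exp
  have d3 := d1.mul d2
  refine d3.congr_deriv ?_
  have hinv : (x + 1)⁻¹ - x⁻¹ = -(1 / (x * (x + 1))) := by
    field_simp
    ring
  rw [hinv]
  ring

lemma antitoneOn_h : AntitoneOn h (Set.Ioi 0) := by
  apply antitoneOn_of_deriv_nonpos (convex_Ioi 0)
  · intro x hx
    exact (hasDerivAt_h hx).differentiableAt.continuousAt.continuousWithinAt
  · intro x hx
    rw [interior_Ioi] at hx
    exact (hasDerivAt_h hx).differentiableAt.differentiableWithinAt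
  · intro x hx
    rw [interior_Ioi] at hx
    rw [(hasDerivAt_h hx).deriv]
    apply mul_nonpos_of_nonpos_of_nonneg
    · have := log_sq_le hx
      linarith
    · exact (Real.exp_pos _).le

lemma tendsto_h : Tendsto h atTop (𝓝 (Real.exp 1)) := by
  have hA : Tendsto (fun x : ℝ => x * Real.log (1 + 1 / x)) atTop (𝓝 1) :=
    Real.tendsto_mul_log_one_add_div_atTop 1
  have hB : Tendsto (fun x : ℝ => Real.log (1 + 1 / x)) atTop (𝓝 0) := by
    have h1 : Tendsto (fun x : ℝ => 1 + 1 / x) atTop (𝓝 (1 + 0)) := by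
      simpa [one_div] using (tendsto_const_nhds : Tendsto (fun _ : ℝ => (1:ℝ)) atTop (𝓝 1)).add tendsto_inv_atTop_zero
    rw [add_zero] at h1
    have h2 := (Real.continuousAt_log one_ne_zero).tendsto.comp h1
    simpa [Function.comp_def] using h2
  have hD : Tendsto (fun x : ℝ => Real.exp (x * Real.log (1 + 1 / x))) atTop
      (𝓝 (Real.exp 1)) := (Real.continuous_exp.tendsto 1).comp hA
  have hAB : Tendsto (fun x : ℝ => x * Real.log (1 + 1 / x) + Real.log (1 + 1 / x)) atTop
      (𝓝 (1 + 0)) := hA.add hB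
  rw [add_zero] at hAB
  have hC : Tendsto (fun x : ℝ => (x * Real.log (1 + 1 / x) + Real.log (1 + 1 / x)) *
      Real.exp (x * Real.log (1 + 1 / x))) atTop (𝓝 (1 * Real.exp 1)) := hAB.mul hD
  rw [one_mul] at hC
  apply hC.congr'
  filter_upwards [eventually_gt_atTop (0:ℝ)] with x hx
  have hx1 : (0:ℝ) < x + 1 := by linarith
  have hlog : Real.log (1 + 1 / x) = Real.log (x + 1) - Real.log x := by
    rw [show (1:ℝ) + 1 / x = (x + 1) / x by field_simp, Real.log_div hx1.ne' hx.ne']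
  have hg : g x = Real.log (x + 1) + x * (Real.log (x + 1) - Real.log x) := by
    simp only [g]; ring
  rw [hlog, h, hg, Real.exp_add, Real.exp_log hx1]
  ring

lemma exp_one_le_h {x : ℝ} (hx : 0 < x) : Real.exp 1 ≤ h x := by
  apply le_of_tendsto tendsto_h
  filter_upwards [eventually_ge_atTop x] with y hy
  exact antitoneOn_h hx (lt_of_lt_of_le hx hy) hy

lemma exp_g_add_one {x : ℝ} (hx : 0 ≤ x) :
    Real.exp (g x) + Real.exp 1 ≤ Real.exp (g (x + 1)) := by
  set G : ℝ → ℝ := fun y => Real.exp (g y) - Real.exp 1 * y with hG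
  have key : MonotoneOn G (Set.Ici 0) := by
    apply monotoneOn_of_deriv_nonneg (convex_Ici 0)
    · exact ((Real.continuous_exp.comp continuous_g).sub
        (continuous_const.mul continuous_id)).continuousOn
    · intro y hy
      rw [interior_Ici] at hy
      have d2 : HasDerivAt (fun z : ℝ => Real.exp (g z)) (h y) y := by
        simpa [h, mul_comm] using (hasDerivAt_g hy).exp
      have d : HasDerivAt G (h y - Real.exp 1 * 1) y := by
        exact d2.sub ((hasDerivAt_id y).const_mul (Real.exp 1))
      exact d.differentiableAt.differentiableWithinAt
    · intro y hy
      rw [interior_Ici] at hy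
      have d : HasDerivAt G (h y - Real.exp 1 * 1) y := by
        have d2 : HasDerivAt (fun z : ℝ => Real.exp (g z)) (h y) y := by
          simpa [h, mul_comm] using (hasDerivAt_g hy).exp
        exact d2.sub ((hasDerivAt_id y).const_mul (Real.exp 1))
      rw [d.deriv]
      have := exp_one_le_h hy
      linarith
  have h01 : G x ≤ G (x + 1) := key hx (by simp; linarith) (by linarith)
  simp only [hG] at h01
  linarith

lemma ginv_spec {t : ℝ} (ht : 0 ≤ t) : 0 ≤ ginv t ∧ g (ginv t) = t := by
  have hg0 : g 0 = 0 := by simp [g]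
  have hb : t ≤ g (Real.exp t) := by
    have hL : t ≤ Real.log (Real.exp t + 1) := by
      conv_lhs => rw [← Real.log_exp t]
      exact Real.log_le_log (Real.exp_pos t) (by linarith)
    have hg : g (Real.exp t) = Real.exp t * (Real.log (Real.exp t + 1) - t)
        + Real.log (Real.exp t + 1) := by
      simp only [g, Real.log_exp]; ring
    nlinarith [Real.exp_pos t]
  have hIVT : t ∈ g '' Set.Icc 0 (Real.exp t) := by
    apply intermediate_value_Icc (Real.exp_pos t).le continuous_g.continuousOn
    rw [hg0]
    exact ⟨ht, hb⟩
  obtain ⟨x, hx, hgx⟩ := hIVT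
  have hex : ∃ a ∈ Set.Ici (0:ℝ), g a = t := ⟨x, hx.1, hgx⟩
  exact ⟨Function.invFunOn_mem hex, Function.invFunOn_eq hex⟩

theorem additive_noise_bound_dominates_EPI (E s : ℝ) (hE0 : 0 < E) (hE1 : E ≤ 1)
    (hs : 0 ≤ s) :
    Real.log (Real.exp s + Real.exp 1 * E) ≤
      g (ginv (s - Real.log E) + 1) + Real.log E := by
  have hlogE : Real.log E ≤ 0 := Real.log_nonpos hE0.le hE1
  have ht : 0 ≤ s - Real.log E := by linarith
  obtain ⟨hx0, hgx⟩ := ginv_spec ht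
  set x := ginv (s - Real.log E)
  have key := exp_g_add_one hx0
  rw [hgx] at key
  have hpos : (0:ℝ) < Real.exp s + Real.exp 1 * E := by positivity
  rw [Real.log_le_iff_le_exp hpos, Real.exp_add, Real.exp_log hE0]
  have hes : Real.exp (s - Real.log E) * E = Real.exp s := by
    rw [Real.exp_sub, Real.exp_log hE0]
    field_simp
  rw [← hes]
  nlinarith [key, hE0]
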